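/- arXiv:2511.21226 — 2 statements merged into one kernel-verified Lean document; each statement's English description precedes it below -/
import Mathlib

section
/- For every simplicial complex K over a finite set I, there exists a finite alphabet A and a language L ⊆ A^I such that a complex K' over I generates L if and only if K ⊆ K'. In particular, K is the unique minimal complex generating L. -/
/-- `W` determines output coordinate `i` of `f`: the value `f x i` only
depends on the restriction of `x` to `W`. -/
def Determines {B J A I : Type*} (f : (J → B) → (I → A)) (i : I) (W : Set J) : Prop :=
  ∀ x y : J → B, (∀ j ∈ W, x j = y j) → f x i = f y i

/-- The input window of output coordinate `i`: the intersection of all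
determining sets (which, for finite data, is the smallest determining set). -/
def window {B J A I : Type*} (f : (J → B) → (I → A)) (i : I) : Set J :=
  ⋂₀ {W : Set J | Determines f i W}

/-- The dual window of an input coordinate `j`. -/
def dualWindow {B J A I : Type*} (f : (J → B) → (I → A)) (j : J) : Set I :=
  {i : I | j ∈ window f i}

/-- The communication complex of `f`: `S ∈ K_f` iff `⋂_{i ∈ S} W_f(i) ≠ ∅`
(the empty intersection being all of `J`). -/
def commComplex {B J A I : Type*} (f : (J → B) → (I → A)) : Set (Set I) :=
  {S : Set I | (⋂ i ∈ S, window f i).Nonempty}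

/-- A complex `K` over `I` generates the language `L ⊆ A^I` if some function
`f : B^J → A^I` (with `B, J` finite, `J` nonempty) has image `L` and
communication complex contained in `K`. -/
def Generates {A I : Type*} (K : Set (Set I)) (L : Set (I → A)) : Prop :=
  ∃ (B J : Type) (_ : Finite B) (_ : Finite J) (_ : Nonempty J)
    (f : (J → B) → (I → A)), Set.range f = L ∧ commComplex f ⊆ K

/-- A complex is connected if no nontrivial partition of the vertex set splits
all of its simplices. -/
def ConnectedComplex {I : Type*} (K : Set (Set I)) : Prop :=
  ¬ ∃ I0 : Set I, I0 ≠ ∅ ∧ I0 ≠ Set.univ ∧ ∀ S ∈ K, S ⊆ I0 ∨ S ⊆ I0ᶜ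

/-- A simplicial complex: a downward closed collection of subsets. -/
def IsComplex {I : Type*} (K : Set (Set I)) : Prop :=
  ∀ S ∈ K, ∀ T ⊆ S, T ∈ K

/-- The 1-skeleton of a complex, as a simple graph. -/
def skeletonGraph {I : Type*} (K : Set (Set I)) : SimpleGraph I :=
  SimpleGraph.fromRel (fun i j => ({i, j} : Set I) ∈ K)

/-- The complex associated to a graph: the empty set, the singletons, and the
edges. -/
def treeComplex {I : Type*} (G : SimpleGraph I) : Set (Set I) :=
  {S | S = ∅ ∨ (∃ i, S = {i}) ∨ ∃ i j, G.Adj i j ∧ S = ({i, j} : Set I)}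

/-- The maximal simplices of a complex. -/
def maxSimplices {I : Type*} (K : Set (Set I)) : Set (Set I) :=
  {S | S ∈ K ∧ ∀ T ∈ K, S ⊆ T → S = T}

/-- The image `f_*(K)` of a complex `K` on the input coordinates of `f`:
generated by the unions of dual windows over simplices of `K`. -/
def pushComplex {B J A I : Type*} (f : (J → B) → (I → A)) (K : Set (Set J)) : Set (Set I) :=
  {T : Set I | ∃ S ∈ K, T ⊆ ⋃ j ∈ S, dualWindow f j}



section AuxStmt10

variable {B J C : Type*}

/-- Auxiliary: `W` determines a `C`-valued function of the inputs. -/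
def Det (f : (J → B) → C) (W : Set J) : Prop :=
  ∀ x y : J → B, (∀ j ∈ W, x j = y j) → f x = f y

lemma det_univ (f : (J → B) → C) : Det f Set.univ := by
  intro x y h
  have : x = y := funext fun j => h j trivial
  rw [this]

lemma det_inter {f : (J → B) → C} {W1 W2 : Set J} (h1 : Det f W1) (h2 : Det f W2) :
    Det f (W1 ∩ W2) := by
  classical
  intro x y hxy
  set z : J → B := fun j => if j ∈ W1 then x j else y j with hz
  have hxz : f x = f z := h1 x z (fun j hj => by simp [hz, hj])
  have hzy : f z = f y := h2 z y (fun j hj => by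
    by_cases h : j ∈ W1
    · simpa [hz, h] using hxy j ⟨h, hj⟩
    · simp [hz, h])
  rw [hxz, hzy]

lemma det_sInter {f : (J → B) → C} {S : Set (Set J)} (hfin : S.Finite)
    (h : ∀ W ∈ S, Det f W) : Det f (⋂₀ S) := by
  refine Set.Finite.induction_on (motive := fun T _ => (∀ W ∈ T, Det f W) → Det f (⋂₀ T)) S hfin
    (fun _ => by simpa using det_univ f) ?_ h
  intro W T _ _ ih hall
  rw [Set.sInter_insert]
  exact det_inter (hall W (Set.mem_insert _ _))
    (ih fun V hV => hall V (Set.mem_insert_of_mem _ hV))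

lemma det_window {A I : Type*} [Finite J] (f : (J → B) → (I → A)) (i : I) :
    Determines f i (window f i) :=
  det_sInter (Set.toFinite _) (fun _ hW => hW)

end AuxStmt10

/-- every simplicial complex `K` is realized as the unique
minimal complex generating some language: there is a finite alphabet `A` and a
language `L ⊆ A^I` such that a complex generates `L` iff it contains `K`. -/
theorem stmt10 {I : Type} [Finite I] (K : Set (Set I)) (hK : IsComplex K)
    (hKe : ∅ ∈ K) :
    ∃ (A : Type) (_ : Finite A) (L : Set (I → A)),
      ∀ K' : Set (Set I), Generates K' L ↔ K ⊆ K' := by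
  classical
  refine ⟨({S : Set I // S ∈ K} → Bool), inferInstance, ?_⟩
  let f : ({S : Set I // S ∈ K} → Bool) → (I → ({S : Set I // S ∈ K} → Bool)) :=
    fun h i S => if i ∈ S.val then h S else false
  have hwf : ∀ i : I, window f i ⊆ {S : {S : Set I // S ∈ K} | i ∈ S.val} := by
    intro i
    apply Set.sInter_subset_of_mem
    intro x y hxy
    funext S
    by_cases hiS : i ∈ S.val
    · simp only [f, if_pos hiS]; exact hxy S hiS
    · simp [f, hiS]
  refine ⟨Set.range f, fun K' => ⟨?_, ?_⟩⟩
  · rintro ⟨B', J', _, _, hne, g, hrange, hsub⟩ T hT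
    apply hsub
    rcases T.eq_empty_or_nonempty with rfl | ⟨i₀, hi₀⟩
    · haveI := hne
      simpa [commComplex] using (Set.univ_nonempty : (Set.univ : Set J').Nonempty)
    by_contra hcon
    have hemp : (⋂ i ∈ T, window g i) = ∅ := Set.not_nonempty_iff_eq_empty.mp hcon
    set a : {S : Set I // S ∈ K} := ⟨T, hT⟩ with ha
    set ψ : (J' → B') → Bool := fun z => g z i₀ a with hψ
    have hkey : ∀ z : J' → B', ∀ i ∈ T, g z i a = ψ z := by
      intro z i hi
      have hz : g z ∈ Set.range f := hrange ▸ Set.mem_range_self z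
      obtain ⟨h, hh⟩ := hz
      have e1 : g z i a = h a := by rw [← hh]; simp [f, ha, hi]
      have e2 : g z i₀ a = h a := by rw [← hh]; simp [f, ha, hi₀]
      exact e1.trans e2.symm
    have hdet : Det ψ (⋂ i ∈ T, window g i) := by
      rw [← Set.sInter_image]
      refine det_sInter (T.toFinite.image _) ?_
      rintro W ⟨i, hi, rfl⟩
      intro z z' hagree
      have hgz : g z i = g z' i := det_window g i z z' hagree
      calc ψ z = g z i a := (hkey z i hi).symm
        _ = g z' i a := by rw [hgz]
        _ = ψ z' := hkey z' i hi
    rw [hemp] at hdet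
    obtain ⟨u, hu⟩ : f (fun _ => false) ∈ Set.range g := by
      rw [hrange]; exact Set.mem_range_self _
    obtain ⟨v, hv⟩ : f (fun S => decide (S = a)) ∈ Set.range g := by
      rw [hrange]; exact Set.mem_range_self _
    have heq : ψ u = ψ v := hdet u v (fun j hj => absurd hj (Set.notMem_empty j))
    have hu' : ψ u = false := by simp [hψ, hu, f]
    have hv' : ψ v = true := by simp [hψ, hv, f, ha, hi₀]
    rw [hu', hv'] at heq
    exact Bool.false_ne_true heq
  · intro hKK'
    refine ⟨Bool, {S : Set I // S ∈ K}, inferInstance, inferInstance, ⟨⟨∅, hKe⟩⟩, f, rfl, ?_⟩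
    intro T hT
    obtain ⟨S₀, hS₀⟩ := hT
    simp only [Set.mem_iInter] at hS₀
    apply hKK'
    refine hK S₀.val S₀.property T ?_
    intro i hi
    exact hwf i (hS₀ i hi)
end

section
/- For |I| ≥ 2, the unique minimal simplicial complex generating Card_{≤1} ⊆ {0,1}^I (sequences with at most one occurrence of 1) is the complete graph on I: a complex generates Card_{≤1} if and only if it contains every 2-element subset of I. -/
lemma determines_univ {B J A I : Type*} (f : (J → B) → (I → A)) (i : I) :
    Determines f i Set.univ := fun x y h => by
  have : x = y := funext fun j => h j trivial
  rw [this]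

lemma determines_inter {B J A I : Type*} {f : (J → B) → (I → A)} {i : I} {W1 W2 : Set J}
    (h1 : Determines f i W1) (h2 : Determines f i W2) : Determines f i (W1 ∩ W2) := by
  classical
  intro x y hxy
  set z : J → B := fun j => if j ∈ W1 then x j else y j with hz
  have e1 : f x i = f z i := h1 x z (fun j hj => by simp [hz, hj])
  have e2 : f z i = f y i := h2 z y (fun j hj => by
    by_cases h : j ∈ W1
    · simpa [hz, h] using hxy j ⟨h, hj⟩
    · simp [hz, h])
  rw [e1, e2]

lemma determines_sInter {B J A I : Type*} {f : (J → B) → (I → A)} {i : I} {F : Set (Set J)}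
    (hF : F.Finite) (h : ∀ W ∈ F, Determines f i W) : Determines f i (⋂₀ F) := by
  refine Set.Finite.induction_on
    (motive := fun F _ => (∀ W ∈ F, Determines f i W) → Determines f i (⋂₀ F)) F hF ?_ ?_ h
  · intro _; simpa using determines_univ f i
  · intro a s _ _ ih h
    rw [Set.sInter_insert]
    exact determines_inter (h a (Set.mem_insert _ _))
      (ih fun W hW => h W (Set.mem_insert_of_mem _ hW))

lemma window_determines {B J A I : Type*} [Finite J] (f : (J → B) → (I → A)) (i : I) :
    Determines f i (window f i) :=
  determines_sInter (Set.toFinite _) (fun _ hW => hW)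

lemma window_subset {B J A I : Type*} {f : (J → B) → (I → A)} {i : I} {W : Set J}
    (hW : Determines f i W) : window f i ⊆ W :=
  Set.sInter_subset_of_mem hW

open Classical in
noncomputable def cardFun {I : Type} (x : {p : I × I // p.1 ≠ p.2} → Bool) (i : I) : Bool :=
  if (∀ p : {p : I × I // p.1 ≠ p.2}, (p.val.1 = i → x p = true) ∧ (p.val.2 = i → x p = false))
  then true else false

lemma cardFun_eq_true_iff {I : Type} (x : {p : I × I // p.1 ≠ p.2} → Bool) (i : I) :
    cardFun x i = true ↔
      ∀ p : {p : I × I // p.1 ≠ p.2}, (p.val.1 = i → x p = true) ∧ (p.val.2 = i → x p = false) := by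
  unfold cardFun; split
  · exact iff_of_true rfl ‹_›
  · exact iff_of_false (by simp) ‹_›

/-- a complex generates `Card_{≤1}` (at most one occurrence of
`1`, with `|I| ≥ 2`) iff it contains every 2-element subset of `I`;
i.e., the complete graph is the unique minimal generating complex. -/
theorem stmt18 {I : Type} [Finite I] (hI : 2 ≤ Nat.card I)
    (K : Set (Set I)) (hK : IsComplex K) :
    Generates K {x : I → Bool | {i | x i = true}.ncard ≤ 1} ↔
      ∀ i j : I, i ≠ j → ({i, j} : Set I) ∈ K := by
  classical
  have hnt : Nontrivial I := Finite.one_lt_card_iff_nontrivial.mp hI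
  constructor
  · rintro ⟨B, J, hB, hJ, hJne, f, hrange, hsub⟩ i j hij
    apply hsub
    show (⋂ k ∈ ({i, j} : Set I), window f k).Nonempty
    rw [Set.biInter_pair]
    by_contra hempty
    rw [Set.not_nonempty_iff_eq_empty] at hempty
    -- get preimages of the two indicator functions
    have hmemi : (fun k => if k = i then true else false) ∈
        {x : I → Bool | {i | x i = true}.ncard ≤ 1} := by
      have hs : {k | (if k = i then true else false) = true} = {i} := by
        ext k; by_cases h : k = i <;> simp [h]
      simpa [Set.mem_setOf_eq, hs] using le_refl 1
    have hmemj : (fun k => if k = j then true else false) ∈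
        {x : I → Bool | {i | x i = true}.ncard ≤ 1} := by
      have hs : {k | (if k = j then true else false) = true} = {j} := by
        ext k; by_cases h : k = j <;> simp [h]
      simpa [Set.mem_setOf_eq, hs] using le_refl 1
    rw [← hrange] at hmemi hmemj
    obtain ⟨x, hx⟩ := hmemi
    obtain ⟨y, hy⟩ := hmemj
    set z : J → B := fun a => if a ∈ window f i then x a else y a with hz
    have fzi : f z i = true := by
      have := window_determines f i z x (fun a ha => by simp [hz, ha])
      rw [this, hx]; simp
    have fzj : f z j = true := by
      have := window_determines f j z y (fun a ha => by
        have : a ∉ window f i := fun h' =>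
          (Set.eq_empty_iff_forall_notMem.mp hempty a) ⟨h', ha⟩
        simp [hz, this])
      rw [this, hy]; simp
    have hzL : f z ∈ {x : I → Bool | {i | x i = true}.ncard ≤ 1} := by
      rw [← hrange]; exact Set.mem_range_self z
    have : i = j := (Set.ncard_le_one (Set.toFinite _)).mp hzL i fzi j fzj
    exact hij this
  · intro hpairs
    obtain ⟨i0, j0, hij0⟩ := exists_pair_ne I
    refine ⟨Bool, {p : I × I // p.1 ≠ p.2}, inferInstance, inferInstance,
      ⟨⟨(i0, j0), hij0⟩⟩, cardFun, ?_, ?_⟩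
    · ext g
      constructor
      · rintro ⟨x, rfl⟩
        rw [Set.mem_setOf_eq, Set.ncard_le_one (Set.toFinite _)]
        intro k hk l hl
        by_contra hkl
        have hck := (cardFun_eq_true_iff x k).mp hk
        have hcl := (cardFun_eq_true_iff x l).mp hl
        have h1 := (hck ⟨(k, l), hkl⟩).1 rfl
        have h2 := (hcl ⟨(k, l), hkl⟩).2 rfl
        rw [h1] at h2; exact Bool.noConfusion h2
      · intro hg
        rw [Set.mem_setOf_eq, Set.ncard_le_one (Set.toFinite _)] at hg
        by_cases h : ∃ i, g i = true
        · obtain ⟨i, hi⟩ := h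
          refine ⟨fun p => if p.val.1 = i then true else false, funext fun k => ?_⟩
          by_cases hk : k = i
          · subst hk
            rw [hi]
            rw [cardFun_eq_true_iff]
            intro p
            constructor
            · intro h1; simp [h1]
            · intro h2
              have : p.val.1 ≠ k := fun h' => p.property (h'.trans h2.symm)
              simp [this]
          · have hgk : g k = false := by
              cases hgk : g k
              · rfl
              · exact absurd (hg k hgk i hi) hk
            rw [hgk]
            have : ¬ (∀ p : {p : I × I // p.1 ≠ p.2},
                (p.val.1 = k → (if p.val.1 = i then true else false) = true) ∧
                (p.val.2 = k → (if p.val.1 = i then true else false) = false)) := by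
              intro hall
              have := (hall ⟨(k, i), hk⟩).1 rfl
              simp [hk] at this
            cases hck : cardFun (fun p => if p.val.1 = i then true else false) k
            · rfl
            · exact absurd ((cardFun_eq_true_iff _ k).mp hck) this
        · push_neg at h
          refine ⟨fun _ => false, funext fun k => ?_⟩
          have hgk : g k = false := by
            cases hgk : g k
            · rfl
            · exact absurd hgk (by simpa using h k)
          rw [hgk]
          obtain ⟨l, hl⟩ := exists_ne k
          have : ¬ (∀ p : {p : I × I // p.1 ≠ p.2},
              (p.val.1 = k → (false : Bool) = true) ∧
              (p.val.2 = k → (false : Bool) = false)) := by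
            intro hall
            have := (hall ⟨(k, l), Ne.symm hl⟩).1 rfl
            exact Bool.noConfusion this
          cases hck : cardFun (fun _ => false) k
          · rfl
          · exact absurd ((cardFun_eq_true_iff _ k).mp hck) this
    · -- commComplex ⊆ K
      intro S hS
      obtain ⟨p, hp⟩ := hS
      have hwin : ∀ k ∈ S, p.val.1 = k ∨ p.val.2 = k := by
        intro k hk
        have hpk : p ∈ window cardFun k := by
          have := Set.mem_iInter.mp hp k
          exact Set.mem_iInter.mp this hk
        have hdet : Determines cardFun k {q : {p : I × I // p.1 ≠ p.2} |
            q.val.1 = k ∨ q.val.2 = k} := by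
          intro x y hxy
          unfold cardFun
          refine if_congr ?_ rfl rfl
          constructor
          · intro hc q
            have e1 : q.val.1 = k → x q = y q := fun h' => hxy q (Or.inl h')
            have e2 : q.val.2 = k → x q = y q := fun h' => hxy q (Or.inr h')
            exact ⟨fun h' => (e1 h').symm.trans ((hc q).1 h'),
                   fun h' => (e2 h').symm.trans ((hc q).2 h')⟩
          · intro hc q
            have e1 : q.val.1 = k → x q = y q := fun h' => hxy q (Or.inl h')
            have e2 : q.val.2 = k → x q = y q := fun h' => hxy q (Or.inr h')
            exact ⟨fun h' => (e1 h').trans ((hc q).1 h'),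
                   fun h' => (e2 h').trans ((hc q).2 h')⟩
        exact window_subset hdet hpk
      have hsub : S ⊆ ({p.val.1, p.val.2} : Set I) := by
        intro k hk
        rcases hwin k hk with h | h
        · exact Or.inl h.symm
        · exact Or.inr h.symm
      exact hK _ (hpairs _ _ p.property) S hsub
end
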